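/- arXiv:1811.10757 — 5 statements merged into one kernel-verified Lean document; each statement's English description precedes it below -/
import Mathlib

section
/- Let H : ℝ → ℝ be a differentiable function and let α : ℝ → ℝ be a strictly increasing function with α(0) = 0 (an extended class-K function). If H(0) ≥ 0 and for all t ≥ 0 the derivative satisfies H'(t) ≥ -α(H(t)), then H(t) ≥ 0 for all t ≥ 0. -/
/-- Scalar comparison lemma underlying zeroing control barrier functions:
if `H(0) ≥ 0` and `H'(t) ≥ -α(H(t))` for all `t ≥ 0`, where `α` is an
extended class-K function (strictly increasing with `α 0 = 0`), then
`H(t) ≥ 0` for all `t ≥ 0`. -/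
theorem zcbf_scalar_comparison
    (H : ℝ → ℝ) (α : ℝ → ℝ)
    (hH : Differentiable ℝ H)
    (hα_mono : StrictMono α) (hα0 : α 0 = 0)
    (hinit : 0 ≤ H 0)
    (hbarrier : ∀ t : ℝ, 0 ≤ t → deriv H t ≥ -α (H t)) :
    ∀ t : ℝ, 0 ≤ t → 0 ≤ H t := by
  intro t0 ht0
  by_contra hneg
  push_neg at hneg
  set S : Set ℝ := Set.Icc 0 t0 ∩ H ⁻¹' Set.Ici 0 with hS
  have hSclosed : IsClosed S := isClosed_Icc.inter (isClosed_Ici.preimage hH.continuous)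
  have hSne : S.Nonempty := ⟨0, ⟨le_refl 0, ht0⟩, hinit⟩
  have hSbdd : BddAbove S := ⟨t0, fun x hx => hx.1.2⟩
  set s := sSup S with hs
  have hsS : s ∈ S := hSclosed.csSup_mem hSne hSbdd
  have hs0 : 0 ≤ s := hsS.1.1
  have hst0 : s ≤ t0 := hsS.1.2
  have hHs : 0 ≤ H s := hsS.2
  have hslt : s < t0 := by
    rcases lt_or_eq_of_le hst0 with h | h
    · exact h
    · exact absurd (h ▸ hHs) (not_le.mpr hneg)
  -- on (s, t0], H < 0
  have hHneg : ∀ x, s < x → x ≤ t0 → H x < 0 := by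
    intro x hx hx'
    by_contra hge
    push_neg at hge
    have : x ∈ S := ⟨⟨hs0.trans hx.le, hx'⟩, hge⟩
    exact absurd (le_csSup hSbdd this) (not_le.mpr hx)
  have hmono : StrictMonoOn H (Set.Icc s t0) := by
    apply strictMonoOn_of_deriv_pos (convex_Icc s t0) hH.continuous.continuousOn
    intro x hx
    rw [interior_Icc] at hx
    have hx0 : 0 ≤ x := hs0.trans hx.1.le
    have hHx : H x < 0 := hHneg x hx.1 hx.2.le
    have : α (H x) < 0 := hα0 ▸ hα_mono hHx
    linarith [hbarrier x hx0]
  have := hmono (Set.left_mem_Icc.mpr hst0) (Set.right_mem_Icc.mpr hst0) hslt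
  linarith
end

section
/- Let H : ℝ → ℝ be twice differentiable, let α₁ : ℝ → ℝ be a differentiable strictly increasing function with α₁(0) = 0, and let α₂ : ℝ → ℝ be a strictly increasing function with α₂(0) = 0. Define B : ℝ → ℝ by B(t) = H'(t) + α₁(H(t)). If H(0) ≥ 0, B(0) ≥ 0, and for all t ≥ 0 the derivative satisfies B'(t) ≥ -α₂(B(t)), then B(t) ≥ 0 for all t ≥ 0 and H(t) ≥ 0 for all t ≥ 0. -/
/-- Comparison lemma: if `f` is differentiable, `α` strictly increasing with
`α 0 = 0`, `f 0 ≥ 0`, and `deriv f t ≥ -α (f t)` for `t ≥ 0`, then `f ≥ 0` on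
`[0, ∞)`. -/
lemma zcbf_aux (f α : ℝ → ℝ) (hf : Differentiable ℝ f)
    (hα : StrictMono α) (hα0 : α 0 = 0) (h0 : 0 ≤ f 0)
    (hd : ∀ t : ℝ, 0 ≤ t → deriv f t ≥ -α (f t)) :
    ∀ t : ℝ, 0 ≤ t → 0 ≤ f t := by
  intro t₁ ht₁
  by_contra hneg
  push_neg at hneg
  have ht₁pos : 0 < t₁ := by
    rcases lt_or_eq_of_le ht₁ with h | h
    · exact h
    · exact absurd h0 (by rw [← h] at hneg; linarith)
  set S : Set ℝ := Set.Icc 0 t₁ ∩ {t | 0 ≤ f t} with hS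
  have hSne : S.Nonempty := ⟨0, ⟨le_refl 0, le_of_lt ht₁pos⟩, h0⟩
  have hSbdd : BddAbove S := ⟨t₁, fun x hx => hx.1.2⟩
  have hSclosed : IsClosed S :=
    IsClosed.inter isClosed_Icc (isClosed_le continuous_const hf.continuous)
  set s := sSup S with hs
  have hsS : s ∈ S := hSclosed.csSup_mem hSne hSbdd
  have hfs : 0 ≤ f s := hsS.2
  have hs0 : 0 ≤ s := hsS.1.1
  have hst : s ≤ t₁ := hsS.1.2
  have hslt : s < t₁ := lt_of_le_of_ne hst (by
    intro h; rw [h] at hfs; linarith)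
  -- On (s, t₁], f < 0
  have hfneg : ∀ x ∈ Set.Ioc s t₁, f x < 0 := by
    intro x ⟨hx1, hx2⟩
    by_contra h
    push_neg at h
    have : x ∈ S := ⟨⟨le_trans hs0 (le_of_lt hx1), hx2⟩, h⟩
    exact absurd (le_csSup hSbdd this) (not_le.mpr hx1)
  -- deriv f > 0 on interior
  have hderiv : ∀ x ∈ Set.Ioo s t₁, 0 < deriv f x := by
    intro x hx
    have hx0 : 0 ≤ x := le_trans hs0 (le_of_lt hx.1)
    have hfx : f x < 0 := hfneg x ⟨hx.1, le_of_lt hx.2⟩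
    have : α (f x) < α 0 := hα hfx
    rw [hα0] at this
    have := hd x hx0
    linarith
  have hmono : StrictMonoOn f (Set.Icc s t₁) :=
    strictMonoOn_of_deriv_pos (convex_Icc s t₁)
      (hf.continuous.continuousOn)
      (by rwa [interior_Icc])
  have : f s < f t₁ := hmono ⟨le_refl s, hst⟩ ⟨hst, le_refl t₁⟩ hslt
  linarith


/-- Theorem 1 of the paper (zeroing control barrier functions for relative
degree two systems) evaluated along a trajectory: with `B(t) = H'(t) + α₁(H(t))`,
if `H(0) ≥ 0`, `B(0) ≥ 0`, and `B'(t) ≥ -α₂(B(t))` for all `t ≥ 0`, then both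
`B(t) ≥ 0` and `H(t) ≥ 0` for all `t ≥ 0`. -/
theorem zcbf_relative_degree_two
    (H : ℝ → ℝ) (α₁ α₂ : ℝ → ℝ)
    (hH : Differentiable ℝ H) (hH' : Differentiable ℝ (deriv H))
    (hα₁ : Differentiable ℝ α₁)
    (hα₁_mono : StrictMono α₁) (hα₁0 : α₁ 0 = 0)
    (hα₂_mono : StrictMono α₂) (hα₂0 : α₂ 0 = 0)
    (B : ℝ → ℝ) (hB : ∀ t : ℝ, B t = deriv H t + α₁ (H t))
    (hinitH : 0 ≤ H 0) (hinitB : 0 ≤ B 0)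
    (hbarrier : ∀ t : ℝ, 0 ≤ t → deriv B t ≥ -α₂ (B t)) :
    (∀ t : ℝ, 0 ≤ t → 0 ≤ B t) ∧ (∀ t : ℝ, 0 ≤ t → 0 ≤ H t) := by
  have hBdiff : Differentiable ℝ B := by
    have : B = fun t => deriv H t + α₁ (H t) := funext hB
    rw [this]
    exact hH'.add (hα₁.comp hH)
  have hBpos : ∀ t : ℝ, 0 ≤ t → 0 ≤ B t :=
    zcbf_aux B α₂ hBdiff hα₂_mono hα₂0 hinitB hbarrier
  refine ⟨hBpos, zcbf_aux H α₁ hH hα₁_mono hα₁0 hinitH ?_⟩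
  intro t ht
  have := hBpos t ht
  rw [hB t] at this
  linarith
end

section
/- Let J be a finite index set. For each j ∈ J let H_j : ℝ → ℝ be twice differentiable, let α₁ : ℝ → ℝ be a differentiable strictly increasing function with α₁(0) = 0, and let α₂ : ℝ → ℝ be a strictly increasing function with α₂(0) = 0. Define B_j(t) = H_j'(t) + α₁(H_j(t)). If for every j ∈ J we have H_j(0) ≥ 0, B_j(0) ≥ 0, and B_j'(t) ≥ -α₂(B_j(t)) for all t ≥ 0, then H_j(t) ≥ 0 for all t ≥ 0 and all j ∈ J; i.e., the trajectory remains in the intersection of all the constraint sets {H_j ≥ 0}. -/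
/-- Comparison lemma: if `f' ≥ -α(f)` on `[0,∞)` with `α` strictly increasing,
`α 0 = 0`, and `f 0 ≥ 0`, then `f ≥ 0` on `[0,∞)`. -/
lemma zcbf_aux_nonneg (f α : ℝ → ℝ) (hf : Differentiable ℝ f)
    (hα : StrictMono α) (hα0 : α 0 = 0) (h0 : 0 ≤ f 0)
    (hd : ∀ t : ℝ, 0 ≤ t → -α (f t) ≤ deriv f t) :
    ∀ t : ℝ, 0 ≤ t → 0 ≤ f t := by
  intro t₁ ht₁
  by_contra hneg
  push_neg at hneg
  have ht₁pos : 0 < t₁ := by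
    rcases lt_or_eq_of_le ht₁ with h | h
    · exact h
    · exact absurd h0 (by rw [← h] at hneg; linarith)
  set S : Set ℝ := Set.Icc 0 t₁ ∩ {t | 0 ≤ f t} with hS
  have hne : S.Nonempty := ⟨0, ⟨le_refl 0, le_of_lt ht₁pos⟩, h0⟩
  have hbdd : BddAbove S := ⟨t₁, fun x hx => hx.1.2⟩
  have hclosed : IsClosed S :=
    isClosed_Icc.inter (isClosed_le continuous_const hf.continuous)
  have hsmem : sSup S ∈ S := hclosed.csSup_mem hne hbdd
  set s := sSup S with hs
  have hs0 : 0 ≤ s := hsmem.1.1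
  have hst : s ≤ t₁ := hsmem.1.2
  have hfs : 0 ≤ f s := hsmem.2
  have hslt : s < t₁ := lt_of_le_of_ne hst (fun h => by rw [h] at hfs; linarith)
  have hlt : ∀ x ∈ Set.Ioc s t₁, f x < 0 := by
    intro x hx
    by_contra hge
    push_neg at hge
    have : x ∈ S := ⟨⟨le_trans hs0 hx.1.le, hx.2⟩, hge⟩
    exact absurd (le_csSup hbdd this) (not_le.mpr hx.1)
  have hmono : StrictMonoOn f (Set.Icc s t₁) := by
    apply strictMonoOn_of_deriv_pos (convex_Icc s t₁) hf.continuous.continuousOn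
    intro x hx
    rw [interior_Icc] at hx
    have hx0 : 0 ≤ x := le_trans hs0 hx.1.le
    have hfx : f x < 0 := hlt x ⟨hx.1, hx.2.le⟩
    have : α (f x) < 0 := by rw [← hα0]; exact hα hfx
    have := hd x hx0
    linarith
  have := hmono ⟨le_refl s, hst⟩ ⟨hslt.le, le_refl t₁⟩ hslt
  have hft₁ : f t₁ < 0 := hlt t₁ ⟨hslt, le_refl t₁⟩
  linarith

/-- Proposition 1 structure: finitely many simultaneous zeroing-control-barrier
conditions render the intersection of the constraint sets `{H_j ≥ 0}` forward
invariant along the closed-loop trajectory. -/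
theorem zcbf_finite_intersection_invariance
    (J : Type*) [Fintype J]
    (H : J → ℝ → ℝ) (α₁ α₂ : ℝ → ℝ)
    (hH : ∀ j : J, Differentiable ℝ (H j))
    (hH' : ∀ j : J, Differentiable ℝ (deriv (H j)))
    (hα₁ : Differentiable ℝ α₁)
    (hα₁_mono : StrictMono α₁) (hα₁0 : α₁ 0 = 0)
    (hα₂_mono : StrictMono α₂) (hα₂0 : α₂ 0 = 0)
    (B : J → ℝ → ℝ) (hB : ∀ j : J, ∀ t : ℝ, B j t = deriv (H j) t + α₁ (H j t))
    (hinitH : ∀ j : J, 0 ≤ H j 0) (hinitB : ∀ j : J, 0 ≤ B j 0)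
    (hbarrier : ∀ j : J, ∀ t : ℝ, 0 ≤ t → deriv (B j) t ≥ -α₂ (B j t)) :
    ∀ j : J, ∀ t : ℝ, 0 ≤ t → 0 ≤ H j t := by
  intro j
  have hBfun : B j = fun t => deriv (H j) t + α₁ (H j t) := funext (hB j)
  have hBdiff : Differentiable ℝ (B j) := by
    rw [hBfun]; exact (hH' j).add (hα₁.comp (hH j))
  have hBnn : ∀ t : ℝ, 0 ≤ t → 0 ≤ B j t :=
    zcbf_aux_nonneg (B j) α₂ hBdiff hα₂_mono hα₂0 (hinitB j)
      (fun t ht => hbarrier j t ht)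
  exact zcbf_aux_nonneg (H j) α₁ (hH j) hα₁_mono hα₁0 (hinitH j)
    (fun t ht => by have := hBnn t ht; rw [hB j t] at this; linarith)
end

section
/- Let n ≥ 1 and let p : Fin n → (Fin 3 → ℝ) be contact point positions whose range is not collinear (there is no affine line in ℝ³ containing all the points p i). Then the grasp map is surjective: for every desired net force F ∈ ℝ³ and net torque τ ∈ ℝ³, there exist contact forces f : Fin n → (Fin 3 → ℝ) such that ∑ i, f i = F and ∑ i, (p i) ×ᵥ (f i) = τ, where ×ᵥ denotes the cross product in ℝ³. -/
open Matrix

private lemma cross_cross_self (v u : Fin 3 → ℝ) :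
    crossProduct v (crossProduct v u) = (v ⬝ᵥ u) • v - (v ⬝ᵥ v) • u := by
  ext i
  fin_cases i <;>
    simp [cross_apply, dotProduct, Fin.sum_univ_three] <;> ring

private lemma dot_cross_cross (v1 v2 : Fin 3 → ℝ) :
    v1 ⬝ᵥ crossProduct v2 (crossProduct v1 v2) =
      (crossProduct v1 v2) ⬝ᵥ (crossProduct v1 v2) := by
  simp [cross_apply, dotProduct, Fin.sum_univ_three]; ring

private lemma key_lemma (v1 v2 : Fin 3 → ℝ) (hv1 : v1 ≠ 0)
    (h2 : ∀ c : ℝ, v2 ≠ c • v1) (t : Fin 3 → ℝ) :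
    ∃ g1 g2 : Fin 3 → ℝ, crossProduct v1 g1 + crossProduct v2 g2 = t := by
  have hv2 : v2 ≠ 0 := by
    intro h; exact h2 0 (by simp [h])
  have hli : LinearIndependent ℝ ![v1, v2] := by
    rw [LinearIndependent.pair_iff' hv1]
    intro a h; exact h2 a h.symm
  have hw : crossProduct v1 v2 ≠ 0 := crossProduct_ne_zero_iff_linearIndependent.2 hli
  set w := crossProduct v1 v2 with hwdef
  have hA : v1 ⬝ᵥ v1 ≠ 0 := fun h => hv1 (dotProduct_self_eq_zero.1 h)
  have hB : v2 ⬝ᵥ v2 ≠ 0 := fun h => hv2 (dotProduct_self_eq_zero.1 h)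
  have hD : w ⬝ᵥ w ≠ 0 := fun h => hw (dotProduct_self_eq_zero.1 h)
  set D := w ⬝ᵥ w with hDdef
  set c0 := crossProduct v2 w with hc0def
  set s := (v1 ⬝ᵥ t) / D with hsdef
  set t2 := s • c0 with ht2def
  set t1 := t - t2 with ht1def
  have hd1 : v1 ⬝ᵥ c0 = D := dot_cross_cross v1 v2
  have hd2 : v2 ⬝ᵥ c0 = 0 := dot_self_cross v2 w
  have hv1t1 : v1 ⬝ᵥ t1 = 0 := by
    rw [ht1def, dotProduct_sub, ht2def, dotProduct_smul, hd1, hsdef]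
    field_simp
    rw [smul_eq_mul, div_mul_cancel₀ _ hD, sub_self]
  have hv2t2 : v2 ⬝ᵥ t2 = 0 := by
    rw [ht2def, dotProduct_smul, hd2, smul_zero]
  refine ⟨-(v1 ⬝ᵥ v1)⁻¹ • (crossProduct v1 t1), -(v2 ⬝ᵥ v2)⁻¹ • (crossProduct v2 t2), ?_⟩
  have e1 : crossProduct v1 (-(v1 ⬝ᵥ v1)⁻¹ • (crossProduct v1 t1)) = t1 := by
    rw [LinearMap.map_smul, cross_cross_self, hv1t1]
    rw [zero_smul, zero_sub, smul_neg, neg_smul, neg_neg, smul_smul,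
      inv_mul_cancel₀ hA, one_smul]
  have e2 : crossProduct v2 (-(v2 ⬝ᵥ v2)⁻¹ • (crossProduct v2 t2)) = t2 := by
    rw [LinearMap.map_smul, cross_cross_self, hv2t2]
    rw [zero_smul, zero_sub, smul_neg, neg_smul, neg_neg, smul_smul,
      inv_mul_cancel₀ hB, one_smul]
  rw [e1, e2, ht1def]; abel

private lemma sum_single {n : ℕ} (j : Fin n) (v : Fin 3 → ℝ) :
    (∑ i, (Pi.single j v : Fin n → (Fin 3 → ℝ)) i) = v := by
  rw [Finset.sum_eq_single j (fun i _ hij => Pi.single_eq_of_ne (M := fun _ : Fin n => Fin 3 → ℝ) hij v)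
    (fun h => absurd (Finset.mem_univ j) h), Pi.single_eq_same]

private lemma sum_cross_single {n : ℕ} (p : Fin n → (Fin 3 → ℝ)) (j : Fin n)
    (v : Fin 3 → ℝ) :
    (∑ i, crossProduct (p i) ((Pi.single j v : Fin n → (Fin 3 → ℝ)) i)) = crossProduct (p j) v := by
  rw [Finset.sum_eq_single j
    (fun i _ hij => by rw [Pi.single_eq_of_ne (M := fun _ : Fin n => Fin 3 → ℝ) hij, map_zero])
    (fun h => absurd (Finset.mem_univ j) h), Pi.single_eq_same]

/-- Full rank of the grasp map: for contact points that are not collinear,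
every net wrench (force `F`, torque `τ`) on the object is realizable by some
choice of contact forces. -/
theorem grasp_map_surjective_of_not_collinear
    (n : ℕ) (hn : 1 ≤ n) (p : Fin n → (Fin 3 → ℝ))
    (hnc : ¬ Collinear ℝ (Set.range p)) :
    ∀ F τ : Fin 3 → ℝ, ∃ f : Fin n → (Fin 3 → ℝ),
      (∑ i, f i) = F ∧ (∑ i, crossProduct (p i) (f i)) = τ := by
  intro F τ
  set i0 : Fin n := ⟨0, hn⟩ with hi0
  -- find a point different from p i0
  have h1 : ∃ j, p j ≠ p i0 := by
    by_contra h
    push_neg at h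
    apply hnc
    apply (collinear_singleton ℝ (p i0)).subset
    rintro q ⟨i, rfl⟩
    simp [h i]
  obtain ⟨j, hj⟩ := h1
  set v1 := p j - p i0 with hv1def
  have hv1 : v1 ≠ 0 := sub_ne_zero.2 hj
  -- find a point off the line through p i0 and p j
  have h2 : ∃ k, ∀ c : ℝ, p k - p i0 ≠ c • v1 := by
    by_contra h
    push_neg at h
    apply hnc
    rw [collinear_iff_of_mem (Set.mem_range_self i0)]
    refine ⟨v1, ?_⟩
    rintro q ⟨k, rfl⟩
    obtain ⟨c, hc⟩ := h k
    exact ⟨c, by rw [vadd_eq_add, ← hc]; abel⟩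
  obtain ⟨k, hk⟩ := h2
  set v2 := p k - p i0 with hv2def
  obtain ⟨g1, g2, hg⟩ := key_lemma v1 v2 hv1 hk (τ - crossProduct (p i0) F)
  refine ⟨Pi.single i0 (F - g1 - g2) + Pi.single j g1 + Pi.single k g2, ?_, ?_⟩
  · simp only [Pi.add_apply]
    rw [Finset.sum_add_distrib, Finset.sum_add_distrib, sum_single, sum_single, sum_single]
    abel
  · simp only [Pi.add_apply, map_add]
    rw [Finset.sum_add_distrib, Finset.sum_add_distrib,
      sum_cross_single, sum_cross_single, sum_cross_single]
    have hg' : crossProduct (p j) g1 - crossProduct (p i0) g1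
        + (crossProduct (p k) g2 - crossProduct (p i0) g2)
        = τ - crossProduct (p i0) F := by
      rw [← hg, hv1def, hv2def, map_sub, map_sub]
      simp [LinearMap.sub_apply]
    have expand : crossProduct (p i0) (F - g1 - g2)
        = crossProduct (p i0) F - crossProduct (p i0) g1 - crossProduct (p i0) g2 := by
      rw [map_sub, map_sub]
    rw [expand]
    linear_combination (norm := abel) hg'
end

section
/- Let m, k be positive natural numbers with k ≤ m. Let M_h be an m × m real positive definite matrix, M_o a 6 × 6 real positive definite matrix, J a k × m real matrix of full row rank (rank J = k), and G a 6 × k real matrix; set B_ho = J * M_h⁻¹ * Jᵀ + Gᵀ * M_o⁻¹ * G. Suppose vectors a ∈ ℝᵐ, b ∈ ℝ⁶, f ∈ ℝᵏ, τ ∈ ℝᵐ, w ∈ ℝ⁶, c ∈ ℝᵏ, d ∈ ℝᵏ satisfy the hand dynamics M_h a = τ - Jᵀ f, the object dynamics M_o b = G f + w, and the differentiated grasp constraint J a + c = Gᵀ b + d. Then the contact force is uniquely determined as f = B_ho⁻¹ (J (M_h⁻¹ τ) + c - d - Gᵀ (M_o⁻¹ w)). -/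
open Matrix


set_option maxRecDepth 4000

/-- Full row rank implies `Jᵀ *ᵥ x ≠ 0` for `x ≠ 0`. -/
lemma transpose_mulVec_ne_zero {k m : ℕ} (J : Matrix (Fin k) (Fin m) ℝ)
    (hJ : J.rank = k) {x : Fin k → ℝ} (hx : x ≠ 0) : Jᵀ *ᵥ x ≠ 0 := by
  have hrT : Jᵀ.rank = k := by rw [Matrix.rank_transpose, hJ]
  have hker : LinearMap.ker Jᵀ.mulVecLin = ⊥ := by
    have h1 := LinearMap.finrank_range_add_finrank_ker (Jᵀ.mulVecLin)
    rw [Matrix.rank] at hrT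
    rw [hrT, Module.finrank_fin_fun] at h1
    have h0 : Module.finrank ℝ (LinearMap.ker Jᵀ.mulVecLin) = 0 := by omega
    exact Submodule.finrank_eq_zero.mp h0
  have hinj : Function.Injective Jᵀ.mulVecLin := LinearMap.ker_eq_bot.mp hker
  intro h
  apply hx
  apply hinj
  rw [Matrix.mulVecLin_apply, Matrix.mulVecLin_apply, h, mulVec_zero]

lemma inv_posDef_real {n : Type*} [Fintype n] [DecidableEq n] {M : Matrix n n ℝ}
    (h : M.PosDef) : (M⁻¹).PosDef := h.inv

lemma JMJ_posDef {k m : ℕ} (M : Matrix (Fin m) (Fin m) ℝ) (hM : M.PosDef)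
    (J : Matrix (Fin k) (Fin m) ℝ) (hJ : J.rank = k) :
    (J * M⁻¹ * Jᵀ).PosDef := by
  have hps : (J * M⁻¹ * Jᴴ).PosSemidef := hM.inv.posSemidef.mul_mul_conjTranspose_same J
  rw [conjTranspose_eq_transpose_of_trivial] at hps
  refine PosDef.of_dotProduct_mulVec_pos hps.1 fun x hx => ?_
  have hxe : Jᵀ *ᵥ x ≠ 0 := transpose_mulVec_ne_zero J hJ hx
  have hpos := hM.inv.dotProduct_mulVec_pos hxe
  rw [star_trivial] at hpos ⊢
  have hkey : x ⬝ᵥ ((J * M⁻¹ * Jᵀ) *ᵥ x) = (Jᵀ *ᵥ x) ⬝ᵥ (M⁻¹ *ᵥ (Jᵀ *ᵥ x)) := by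
    rw [← mulVec_mulVec, ← mulVec_mulVec, dotProduct_mulVec, mulVec_transpose]
  rw [hkey]
  exact hpos

/-- Equation (19) of the paper: given the hand dynamics `M_h a = τ - Jᵀ f`,
the object dynamics `M_o b = G f + w`, and the differentiated grasp constraint
`J a + c = Gᵀ b + d`, the contact force is uniquely determined as
`f = B_ho⁻¹ (J (M_h⁻¹ τ) + c - d - Gᵀ (M_o⁻¹ w))`
with `B_ho = J M_h⁻¹ Jᵀ + Gᵀ M_o⁻¹ G`. -/
theorem contact_force_formula
    (m k : ℕ) (hm : 0 < m) (hk : 0 < k) (hkm : k ≤ m)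
    (M_h : Matrix (Fin m) (Fin m) ℝ) (hMh : M_h.PosDef)
    (M_o : Matrix (Fin 6) (Fin 6) ℝ) (hMo : M_o.PosDef)
    (J : Matrix (Fin k) (Fin m) ℝ) (hJ : J.rank = k)
    (G : Matrix (Fin 6) (Fin k) ℝ)
    (a : Fin m → ℝ) (b : Fin 6 → ℝ) (f : Fin k → ℝ)
    (τ : Fin m → ℝ) (w : Fin 6 → ℝ) (c d : Fin k → ℝ)
    (hhand : M_h *ᵥ a = τ - Jᵀ *ᵥ f)
    (hobj : M_o *ᵥ b = G *ᵥ f + w)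
    (hgrasp : J *ᵥ a + c = Gᵀ *ᵥ b + d) :
    f = (J * M_h⁻¹ * Jᵀ + Gᵀ * M_o⁻¹ * G)⁻¹ *ᵥ
      (J *ᵥ (M_h⁻¹ *ᵥ τ) + c - d - Gᵀ *ᵥ (M_o⁻¹ *ᵥ w)) := by
  set B := J * M_h⁻¹ * Jᵀ + Gᵀ * M_o⁻¹ * G with hB
  have hct : Gᴴ = Gᵀ := by ext i j; simp [conjTranspose_apply]
  have hMoinv := inv_posDef_real hMo
  have hGps := hMoinv.posSemidef.conjTranspose_mul_mul_same G
  rw [hct] at hGps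
  have hBpd : B.PosDef := (JMJ_posDef M_h hMh J hJ).add_posSemidef hGps
  have hBunit : IsUnit B := hBpd.isUnit
  have ha : a = M_h⁻¹ *ᵥ (τ - Jᵀ *ᵥ f) := by
    rw [← hhand, mulVec_mulVec, Matrix.nonsing_inv_mul _ hMh.det_pos.ne'.isUnit, one_mulVec]
  have hb : b = M_o⁻¹ *ᵥ (G *ᵥ f + w) := by
    rw [← hobj, mulVec_mulVec, Matrix.nonsing_inv_mul _ hMo.det_pos.ne'.isUnit, one_mulVec]
  have key : B *ᵥ f = J *ᵥ (M_h⁻¹ *ᵥ τ) + c - d - Gᵀ *ᵥ (M_o⁻¹ *ᵥ w) := by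
    have h2 : J *ᵥ a + c = Gᵀ *ᵥ b + d := hgrasp
    rw [ha, hb] at h2
    have hL : J *ᵥ (M_h⁻¹ *ᵥ (τ - Jᵀ *ᵥ f)) =
        J *ᵥ (M_h⁻¹ *ᵥ τ) - (J * M_h⁻¹ * Jᵀ) *ᵥ f := by
      rw [mulVec_sub, mulVec_sub, mulVec_mulVec, mulVec_mulVec, mulVec_mulVec]
    have hR : Gᵀ *ᵥ (M_o⁻¹ *ᵥ (G *ᵥ f + w)) =
        (Gᵀ * M_o⁻¹ * G) *ᵥ f + Gᵀ *ᵥ (M_o⁻¹ *ᵥ w) := by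
      rw [mulVec_add, mulVec_add, mulVec_mulVec, mulVec_mulVec, mulVec_mulVec]
    rw [hL, hR] at h2
    rw [hB, add_mulVec]
    linear_combination -h2
  rw [← key, mulVec_mulVec, Matrix.nonsing_inv_mul _ (isUnit_iff_isUnit_det _ |>.mp hBunit),
    one_mulVec]
end
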